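/- A map R: V → G is a relative Rota-Baxter operator of weight 0 if and only if its graph {(u, R(u)) : u ∈ V} is a subgroup of the semidirect product V ⋊_Φ G. -/

import Mathlib

/-- The semidirect product `V ⋊[Φ] G` is realized via `Multiplicative V`, where the
`G`-action `Φ'` on `Multiplicative V` corresponds to `Φ : G →* AddAut V`. -/
theorem rrb_iff_graph_subgroup {G V : Type*} [Group G] [AddCommGroup V]
    (Φ : G →* Multiplicative (AddAut V)) (R : V → G)
    (Φ' : G →* MulAut (Multiplicative V))
    (hΦ' : ∀ (g : G) (v : V), Φ' g (Multiplicative.ofAdd v) = Multiplicative.ofAdd (Multiplicative.toAdd (Φ g) v)) :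
    (∀ u v : V, R u * R v = R (u + Multiplicative.toAdd (Φ (R u)) v)) ↔
    ∃ H : Subgroup (SemidirectProduct (Multiplicative V) G Φ'),
      ∀ p, p ∈ H ↔ p.right = R (Multiplicative.toAdd p.left) := by
  constructor
  · intro hR
    have hR0 : R 0 = 1 := by
      have h := hR 0 0
      simp at h
      exact mul_left_cancel (a := R 0) (by rw [h, mul_one])
    refine ⟨{ carrier := {p | p.right = R (Multiplicative.toAdd p.left)}
              one_mem' := by simp [hR0]
              mul_mem' := ?_
              inv_mem' := ?_ }, fun p => Iff.rfl⟩
    · rintro p q hp hq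
      simp only [Set.mem_setOf_eq] at *
      have : q.left = Multiplicative.ofAdd (Multiplicative.toAdd q.left) := rfl
      rw [SemidirectProduct.mul_right, SemidirectProduct.mul_left, hp, hq,
        hR (Multiplicative.toAdd p.left) (Multiplicative.toAdd q.left)]
      congr 1
      rw [toAdd_mul, this, hΦ']
      simp
    · rintro p hp
      simp only [Set.mem_setOf_eq] at *
      set u := Multiplicative.toAdd p.left
      have key : R u * R (-(-Multiplicative.toAdd (Φ (R u))) u) = 1 := by
        have := hR u ((-Multiplicative.toAdd (Φ (R u))) (-u))
        simp only [map_neg] at this ⊢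
        rw [this]
        have : (Multiplicative.toAdd (Φ (R u))) ((-Multiplicative.toAdd (Φ (R u))) u) = u := (Multiplicative.toAdd (Φ (R u))).apply_symm_apply u
        simp [this, hR0]
      rw [SemidirectProduct.inv_right, SemidirectProduct.inv_left, hp]
      have hL : Multiplicative.toAdd ((Φ' (R u)⁻¹) p.left⁻¹) = -(-Multiplicative.toAdd (Φ (R u))) u := by
        have : p.left⁻¹ = Multiplicative.ofAdd (-u) := rfl
        rw [this, hΦ']
        simp only [toAdd_ofAdd, map_neg]
        congr 1
        have : Multiplicative.toAdd (Φ (R u)⁻¹) = -Multiplicative.toAdd (Φ (R u)) := by rw [map_inv, toAdd_inv]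
        rw [this]
      rw [hL]
      exact inv_eq_of_mul_eq_one_right key
  · rintro ⟨H, hH⟩ u v
    have hu : (⟨Multiplicative.ofAdd u, R u⟩ : SemidirectProduct (Multiplicative V) G Φ') ∈ H := by
      rw [hH]; rfl
    have hv : (⟨Multiplicative.ofAdd v, R v⟩ : SemidirectProduct (Multiplicative V) G Φ') ∈ H := by
      rw [hH]; rfl
    have := (hH _).mp (H.mul_mem hu hv)
    rw [SemidirectProduct.mul_right, SemidirectProduct.mul_left] at this
    rw [this]
    congr 1
    rw [toAdd_mul, hΦ']
    simp
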